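/- Let c > 0 and 0 < σ < c². The map Φ(ρ, v) = (u⁰(ρ,v), u¹(ρ,v)), where u⁰(ρ,v) = ρ·[((σ + c²)/c²)·v²/(c² − v²) + 1] and u¹(ρ,v) = ρ·(σ + c²)·v/(c² − v²), is injective on the region {(ρ, v) : ρ > 0 and |v| < c}; moreover Φ is differentiable on this region and the determinant of its derivative is continuous and non-zero at every point of the region. -/

import Mathlib

lemma det_clm_prod (T : ℝ × ℝ →L[ℝ] ℝ × ℝ) :
    LinearMap.det (T.toLinearMap) =
      (T (1, 0)).1 * (T (0, 1)).2 - (T (0, 1)).1 * (T (1, 0)).2 := by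
  rw [← LinearMap.det_toMatrix (Module.Basis.finTwoProd ℝ)]
  rw [Matrix.det_fin_two]
  simp [LinearMap.toMatrix_apply, Module.Basis.finTwoProd]

set_option maxHeartbeats 1600000 in
/-- The map from the fluid variables `(ρ, v)` to the conserved quantities
`(u⁰, u¹) = (T⁰⁰_M, T⁰¹_M)` of a perfect fluid with equation of state `p = σρ`,
`0 < √σ < c`, is injective on `{ρ > 0, |v| < c}`, differentiable there, and the
determinant of its derivative is continuous and non-zero on that region. -/
theorem fluid_to_conserved_injective (c σ : ℝ) (hc : 0 < c) (hσ : 0 < σ)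
    (hσc : σ < c ^ 2)
    (Φ : ℝ × ℝ → ℝ × ℝ)
    (hΦ : Φ = fun p =>
      (p.1 * (((σ + c ^ 2) / c ^ 2) * p.2 ^ 2 / (c ^ 2 - p.2 ^ 2) + 1),
       p.1 * (σ + c ^ 2) * p.2 / (c ^ 2 - p.2 ^ 2)))
    (S : Set (ℝ × ℝ)) (hS : S = {p : ℝ × ℝ | 0 < p.1 ∧ |p.2| < c}) :
    Set.InjOn Φ S ∧
    (∀ p ∈ S, DifferentiableAt ℝ Φ p) ∧
    ContinuousOn
      (fun p => LinearMap.det ((fderiv ℝ Φ p).toLinearMap)) S ∧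
    ∀ p ∈ S, LinearMap.det ((fderiv ℝ Φ p).toLinearMap) ≠ 0 := by
  have hc2 : (0:ℝ) < c ^ 2 := by positivity
  have hK : (0:ℝ) < σ + c ^ 2 := by positivity
  subst hΦ hS
  have main : ∀ p : ℝ × ℝ, p ∈ {p : ℝ × ℝ | 0 < p.1 ∧ |p.2| < c} →
      DifferentiableAt ℝ (fun p : ℝ × ℝ =>
        (p.1 * (((σ + c ^ 2) / c ^ 2) * p.2 ^ 2 / (c ^ 2 - p.2 ^ 2) + 1),
         p.1 * (σ + c ^ 2) * p.2 / (c ^ 2 - p.2 ^ 2))) p ∧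
      LinearMap.det ((fderiv ℝ (fun p : ℝ × ℝ =>
        (p.1 * (((σ + c ^ 2) / c ^ 2) * p.2 ^ 2 / (c ^ 2 - p.2 ^ 2) + 1),
         p.1 * (σ + c ^ 2) * p.2 / (c ^ 2 - p.2 ^ 2))) p).toLinearMap) =
        p.1 * (σ + c ^ 2) * (c ^ 4 - σ * p.2 ^ 2) / (c ^ 2 * (c ^ 2 - p.2 ^ 2) ^ 2) := by
    rintro ⟨ρ, v⟩ ⟨hp1, hp2⟩
    simp only at hp1 hp2 ⊢
    rw [abs_lt] at hp2
    have hd : 0 < c ^ 2 - v ^ 2 := by nlinarith [hp2.1, hp2.2]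
    have hden : c ^ 2 - v ^ 2 ≠ 0 := hd.ne'
    have hg : HasDerivAt (fun w : ℝ => ((σ + c ^ 2) / c ^ 2) * w ^ 2 / (c ^ 2 - w ^ 2) + 1)
        (2 * (σ + c ^ 2) * v / (c ^ 2 - v ^ 2) ^ 2) v := by
      have h := (((hasDerivAt_pow 2 v).const_mul ((σ + c ^ 2) / c ^ 2)).div
        ((hasDerivAt_const v (c ^ 2)).sub (hasDerivAt_pow 2 v)) hden).add_const 1
      refine h.congr_deriv ?_
      simp only [Pi.sub_apply]
      field_simp
      ring
    have hh : HasDerivAt (fun w : ℝ => (σ + c ^ 2) * w / (c ^ 2 - w ^ 2))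
        ((σ + c ^ 2) * (c ^ 2 + v ^ 2) / (c ^ 2 - v ^ 2) ^ 2) v := by
      have h := ((hasDerivAt_id v).const_mul (σ + c ^ 2)).div
        ((hasDerivAt_const v (c ^ 2)).sub (hasDerivAt_pow 2 v)) hden
      refine h.congr_deriv ?_
      simp only [Pi.sub_apply, id]
      field_simp
      ring
    have hF1 : HasFDerivAt (fun q : ℝ × ℝ =>
        q.1 * (((σ + c ^ 2) / c ^ 2) * q.2 ^ 2 / (c ^ 2 - q.2 ^ 2) + 1))
        ((ρ : ℝ) • ((2 * (σ + c ^ 2) * v / (c ^ 2 - v ^ 2) ^ 2) •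
            ContinuousLinearMap.snd ℝ ℝ ℝ) +
          (((σ + c ^ 2) / c ^ 2) * v ^ 2 / (c ^ 2 - v ^ 2) + 1) •
            ContinuousLinearMap.fst ℝ ℝ ℝ) (ρ, v) :=
      by exact hasFDerivAt_fst.mul (hg.comp_hasFDerivAt (ρ, v) (hasFDerivAt_snd (𝕜 := ℝ) (p := (ρ, v))))
    have hF2 : HasFDerivAt (fun q : ℝ × ℝ =>
        q.1 * (σ + c ^ 2) * q.2 / (c ^ 2 - q.2 ^ 2))
        ((ρ : ℝ) • (((σ + c ^ 2) * (c ^ 2 + v ^ 2) / (c ^ 2 - v ^ 2) ^ 2) •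
            ContinuousLinearMap.snd ℝ ℝ ℝ) +
          ((σ + c ^ 2) * v / (c ^ 2 - v ^ 2)) • ContinuousLinearMap.fst ℝ ℝ ℝ) (ρ, v) := by
      have heqf : (fun q : ℝ × ℝ => q.1 * (σ + c ^ 2) * q.2 / (c ^ 2 - q.2 ^ 2)) =
          fun q : ℝ × ℝ => q.1 * ((σ + c ^ 2) * q.2 / (c ^ 2 - q.2 ^ 2)) := by
        funext q; ring
      rw [heqf]
      exact hasFDerivAt_fst.mul (hh.comp_hasFDerivAt (ρ, v) (hasFDerivAt_snd (𝕜 := ℝ) (p := (ρ, v))))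
    have hasF := hF1.prodMk hF2
    refine ⟨hasF.differentiableAt, ?_⟩
    rw [hasF.fderiv, det_clm_prod]
    simp only [ContinuousLinearMap.prod_apply, ContinuousLinearMap.add_apply,
      ContinuousLinearMap.coe_smul', Pi.smul_apply,
      ContinuousLinearMap.coe_snd', ContinuousLinearMap.coe_fst', smul_eq_mul]
    field_simp
    ring
  refine ⟨?_, fun p hp => (main p hp).1, ?_, ?_⟩
  · -- injectivity
    rintro ⟨a, x⟩ ⟨ha, hx⟩ ⟨b, y⟩ ⟨hb, hy⟩ heq
    clear main
    simp only at ha hx hb hy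
    rw [abs_lt] at hx hy
    have hdx : 0 < c ^ 2 - x ^ 2 := by nlinarith [hx.1, hx.2]
    have hdy : 0 < c ^ 2 - y ^ 2 := by nlinarith [hy.1, hy.2]
    simp only [Prod.mk.injEq] at heq ⊢
    obtain ⟨h0, h1⟩ := heq
    have h0' : c ^ 2 * (a * (c ^ 4 + σ * x ^ 2) * (c ^ 2 - y ^ 2))
        = c ^ 2 * (b * (c ^ 4 + σ * y ^ 2) * (c ^ 2 - x ^ 2)) := by
      field_simp at h0
      linear_combination c ^ 2 * h0
    have h1' : a * (σ + c ^ 2) * x * (c ^ 2 - y ^ 2)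
        = b * (σ + c ^ 2) * y * (c ^ 2 - x ^ 2) := by
      field_simp at h1
      linear_combination (σ + c ^ 2) * h1
    have key : ((σ + c ^ 2) * (a * (c ^ 2 - y ^ 2)) * c ^ 2) *
        ((x - y) * (σ * x * y - c ^ 4)) = 0 := by
      linear_combination (σ + c ^ 2) * y * h0' - c ^ 2 * (c ^ 4 + σ * y ^ 2) * h1'
    have hpos : 0 < (σ + c ^ 2) * (a * (c ^ 2 - y ^ 2)) * c ^ 2 := by positivity
    have hneg : σ * x * y - c ^ 4 < 0 := by
      nlinarith [hx.1, hx.2, hy.1, hy.2, sq_nonneg (x + y), sq_nonneg (x - y)]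
    have h7 : (x - y) * (σ * x * y - c ^ 4) = 0 :=
      (mul_eq_zero.mp key).resolve_left hpos.ne'
    have hxy : x = y := by
      have := (mul_eq_zero.mp h7).resolve_right hneg.ne
      linarith
    subst hxy
    refine ⟨?_, rfl⟩
    have hab : (a - b) * (c ^ 2 * ((c ^ 4 + σ * x ^ 2) * (c ^ 2 - x ^ 2))) = 0 := by
      linear_combination h0'
    have hposx : 0 < c ^ 2 * ((c ^ 4 + σ * x ^ 2) * (c ^ 2 - x ^ 2)) := by positivity
    have := (mul_eq_zero.mp hab).resolve_right hposx.ne'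
    linarith
  · -- continuity of the determinant
    have hcont : ContinuousOn (fun p : ℝ × ℝ =>
        p.1 * (σ + c ^ 2) * (c ^ 4 - σ * p.2 ^ 2) / (c ^ 2 * (c ^ 2 - p.2 ^ 2) ^ 2))
        {p : ℝ × ℝ | 0 < p.1 ∧ |p.2| < c} := by
      clear main
      apply ContinuousOn.div (by fun_prop) (by fun_prop)
      rintro ⟨ρ, v⟩ ⟨hp1, hp2⟩
      simp only at hp2 ⊢
      rw [abs_lt] at hp2
      have hd : 0 < c ^ 2 - v ^ 2 := by nlinarith [hp2.1, hp2.2]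
      positivity
    exact hcont.congr fun p hp => (main p hp).2
  · -- determinant nonzero
    intro p hp
    rw [(main p hp).2]
    clear main
    obtain ⟨hp1, hp2⟩ := hp
    rw [abs_lt] at hp2
    have hd : 0 < c ^ 2 - p.2 ^ 2 := by nlinarith [hp2.1, hp2.2]
    have hnum : 0 < p.1 * (σ + c ^ 2) * (c ^ 4 - σ * p.2 ^ 2) := by
      have hlt : σ * p.2 ^ 2 < c ^ 4 := by nlinarith [hp2.1, hp2.2, sq_nonneg p.2]
      have h4 : 0 < c ^ 4 - σ * p.2 ^ 2 := by linarith
      positivity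
    have hden : 0 < c ^ 2 * (c ^ 2 - p.2 ^ 2) ^ 2 := by positivity
    exact (div_pos hnum hden).ne'
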